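/- (Submodularity of mutual information under conditional independence) Let $X_1,\dots,X_m$ be finite random variables that are conditionally independent given $\hat{H}$. Then the set function $F(S) = I(X_S; \hat{H})$ on subsets $S \subseteq \{1,\dots,m\}$ is submodular: for all $S \subseteq T$ and $k \notin T$, $F(S \cup \{k\}) - F(S) \ge F(T \cup \{k\}) - F(T)$. -/

import Mathlib

open Finset Real

/-- Probability of an event under a pmf `p` on a finite sample space. -/
noncomputable def pr {O : Type*} [Fintype O] (p : O → ℝ) (E : O → Prop) [DecidablePred E] : ℝ :=
  ∑ w, if E w then p w else 0

/-- Pushforward pmf of a random variable `X`. -/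
noncomputable def pmfOf {O A : Type*} [Fintype O] [DecidableEq A] (p : O → ℝ) (X : O → A)
    (a : A) : ℝ :=
  ∑ w, if X w = a then p w else 0

/-- Shannon entropy (natural log) of a random variable `X` under pmf `p`. -/
noncomputable def Hent {O A : Type*} [Fintype O] [Fintype A] [DecidableEq A] (p : O → ℝ)
    (X : O → A) : ℝ :=
  ∑ a, Real.negMulLog (pmfOf p X a)

/-- Mutual information `I(X;Y) = H(X) + H(Y) - H(X,Y)`. -/
noncomputable def MI {O A B : Type*} [Fintype O] [Fintype A] [DecidableEq A] [Fintype B]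
    [DecidableEq B] (p : O → ℝ) (X : O → A) (Y : O → B) : ℝ :=
  Hent p X + Hent p Y - Hent p (fun w => (X w, Y w))

/-- Conditional entropy `H(X ∣ Y) = H(X,Y) - H(Y)`. -/
noncomputable def condEnt {O A B : Type*} [Fintype O] [Fintype A] [DecidableEq A] [Fintype B]
    [DecidableEq B] (p : O → ℝ) (X : O → A) (Y : O → B) : ℝ :=
  Hent p (fun w => (X w, Y w)) - Hent p Y

/-- Conditional independence of `X 0, …, X (m-1)` given `Hh`, expressed multiplicatively
to avoid division: `P(∀ i, X i = a i, Hh = b) * P(Hh = b)^(m-1) = ∏ i, P(X i = a i, Hh = b)`. -/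
def CondIndep {O A B : Type*} [Fintype O] [DecidableEq A] [DecidableEq B]
    (p : O → ℝ) (m : ℕ) (X : Fin m → O → A) (Hh : O → B) : Prop :=
  ∀ (a : Fin m → A) (b : B),
    pr p (fun w => (∀ i, X i w = a i) ∧ Hh w = b) * (pr p (fun w => Hh w = b)) ^ (m - 1)
      = ∏ i, pr p (fun w => X i w = a i ∧ Hh w = b)

/-- Mutual information between the subtuple of variables indexed by `S` and `Hh`. -/
noncomputable def MIsub {O A B : Type*} [Fintype O] [Fintype A] [DecidableEq A] [Fintype B]
    [DecidableEq B] (p : O → ℝ) {m : ℕ} (X : Fin m → O → A) (Hh : O → B)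
    (S : Finset (Fin m)) : ℝ :=
  MI p (fun w => fun i : {x // x ∈ S} => X i.1 w) Hh


section PrLemmas

variable {O : Type*} [Fintype O] (p : O → ℝ)

lemma pr_congr {E F : O → Prop} [DecidablePred E] [DecidablePred F]
    (h : ∀ w, E w ↔ F w) : pr p E = pr p F := by
  unfold pr
  exact Finset.sum_congr rfl fun w _ => by simp only [h w]

lemma pr_nonneg (hp : ∀ w, 0 ≤ p w) (E : O → Prop) [DecidablePred E] : 0 ≤ pr p E :=
  Finset.sum_nonneg fun w _ => by split <;> [exact hp w; exact le_rfl]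

lemma pr_mono (hp : ∀ w, 0 ≤ p w) {E F : O → Prop} [DecidablePred E] [DecidablePred F]
    (h : ∀ w, E w → F w) : pr p E ≤ pr p F := by
  unfold pr
  refine Finset.sum_le_sum fun w _ => ?_
  by_cases hE : E w
  · simp [hE, h w hE]
  · simp only [hE, if_false]; split <;> [exact hp w; exact le_rfl]

lemma pr_eq_zero_of {E : O → Prop} [DecidablePred E] (h : ∀ w, ¬ E w) : pr p E = 0 := by
  unfold pr
  exact Finset.sum_eq_zero fun w _ => by simp [h w]

/-- Partition an event by the values of a random variable. -/
lemma pr_partition {C : Type*} [Fintype C] [DecidableEq C] (Y : O → C)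
    (E : O → Prop) [DecidablePred E] :
    pr p E = ∑ c, pr p (fun w => E w ∧ Y w = c) := by
  unfold pr
  rw [Finset.sum_comm]
  refine Finset.sum_congr rfl fun w _ => ?_
  by_cases hE : E w
  · simp [hE]
  · simp [hE]

end PrLemmas

section Slice

variable {U V : Type*} [Fintype U] [Fintype V]

lemma slice_core (s : U → V → ℝ) (hs : ∀ u v, 0 ≤ s u v)
    (main : 0 ≤ ∑ u, ∑ v, (s u v * Real.log (s u v) + s u v * Real.log (∑ u, ∑ v, s u v)
        - s u v * Real.log (∑ v', s u v') - s u v * Real.log (∑ u', s u' v))) :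
    (∑ u, ∑ v, negMulLog (s u v)) + negMulLog (∑ u, ∑ v, s u v)
      ≤ (∑ u, negMulLog (∑ v, s u v)) + ∑ v, negMulLog (∑ u, s u v) := by
  have eL : ∑ u, ∑ v, negMulLog (s u v) = -∑ u, ∑ v, s u v * Real.log (s u v) := by
    simp only [negMulLog, neg_mul, Finset.sum_neg_distrib]
  have eC : negMulLog (∑ u, ∑ v, s u v)
      = -∑ u, ∑ v, s u v * Real.log (∑ u, ∑ v, s u v) := by
    simp only [negMulLog, neg_mul, Finset.sum_neg_distrib, neg_inj]
    rw [Finset.sum_mul]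
    exact Finset.sum_congr rfl fun u _ => Finset.sum_mul _ _ _
  have eR1 : ∑ u, negMulLog (∑ v, s u v) = -∑ u, ∑ v, s u v * Real.log (∑ v', s u v') := by
    simp only [negMulLog, neg_mul, Finset.sum_neg_distrib, neg_inj]
    exact Finset.sum_congr rfl fun u _ => Finset.sum_mul _ _ _
  have eR2 : ∑ v, negMulLog (∑ u, s u v) = -∑ u, ∑ v, s u v * Real.log (∑ u', s u' v) := by
    simp only [negMulLog, neg_mul, Finset.sum_neg_distrib, neg_inj]
    rw [Finset.sum_comm]
    exact Finset.sum_congr rfl fun v _ => Finset.sum_mul _ _ _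
  simp only [Finset.sum_add_distrib, Finset.sum_sub_distrib] at main
  rw [eL, eC, eR1, eR2]
  linarith

lemma slice_le (s : U → V → ℝ) (hs : ∀ u v, 0 ≤ s u v) :
    (∑ u, ∑ v, negMulLog (s u v)) + negMulLog (∑ u, ∑ v, s u v)
      ≤ (∑ u, negMulLog (∑ v, s u v)) + ∑ v, negMulLog (∑ u, s u v) := by
  refine slice_core s hs ?_
  set c := ∑ u, ∑ v, s u v with hc
  have hc0 : 0 ≤ c := Finset.sum_nonneg fun u _ => Finset.sum_nonneg fun v _ => hs u v
  rcases hc0.eq_or_lt with h0 | hcpos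
  · have hz : ∀ u v, s u v = 0 := by
      intro u v
      have h1 := (Finset.sum_eq_zero_iff_of_nonneg
        (fun u _ => Finset.sum_nonneg fun v _ => hs u v)).1 h0.symm u (mem_univ u)
      exact (Finset.sum_eq_zero_iff_of_nonneg (fun v _ => hs u v)).1 h1 v (mem_univ v)
    simp [hz]
  · set su := fun u => ∑ v, s u v with hsu
    set sv := fun v => ∑ u, s u v with hsv
    have hsunn : ∀ u, 0 ≤ su u := fun u => Finset.sum_nonneg fun v _ => hs u v
    have hsvnn : ∀ v, 0 ≤ sv v := fun v => Finset.sum_nonneg fun u _ => hs u v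
    have key : ∀ u v, s u v - su u * sv v / c ≤
        s u v * Real.log (s u v) + s u v * Real.log c
          - s u v * Real.log (su u) - s u v * Real.log (sv v) := by
      intro u v
      rcases (hs u v).eq_or_lt with h | hpos
      · rw [← h]
        simp only [zero_mul, sub_zero, zero_sub, add_zero, zero_add]
        have : 0 ≤ su u * sv v / c :=
          div_nonneg (mul_nonneg (hsunn u) (hsvnn v)) hc0
        linarith
      · have hsupos : 0 < su u :=
          lt_of_lt_of_le hpos (Finset.single_le_sum (fun v _ => hs u v) (mem_univ v))
        have hsvpos : 0 < sv v :=
          lt_of_lt_of_le hpos (Finset.single_le_sum (fun u _ => hs u v) (mem_univ u))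
        have harg : 0 < su u * sv v / (s u v * c) := by positivity
        have hlog := Real.log_le_sub_one_of_pos harg
        rw [Real.log_div (by positivity) (by positivity),
          Real.log_mul hsupos.ne' hsvpos.ne', Real.log_mul hpos.ne' hcpos.ne'] at hlog
        have h2 := mul_le_mul_of_nonneg_left hlog hpos.le
        have h3 : s u v * (su u * sv v / (s u v * c) - 1) = su u * sv v / c - s u v := by
          field_simp
        rw [h3] at h2
        nlinarith [h2]
    have hsum_su : ∑ u, su u = c := rfl
    have hsum_sv : ∑ v, sv v = c := by rw [hsv, hc]; rw [Finset.sum_comm]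
    have e0 : ∑ u, ∑ v, (s u v - su u * sv v / c) = 0 := by
      have e1 : ∑ u, ∑ v, su u * sv v / c = c := by
        have einner : ∀ u, ∑ v, su u * sv v / c = su u := by
          intro u
          rw [← Finset.sum_div, ← Finset.mul_sum, hsum_sv,
            mul_div_assoc, div_self hcpos.ne', mul_one]
        rw [Finset.sum_congr rfl fun u _ => einner u, hsum_su]
      simp only [Finset.sum_sub_distrib, e1, ← hc, sub_self]
      exact sub_eq_zero.2 rfl
    calc (0:ℝ) = ∑ u, ∑ v, (s u v - su u * sv v / c) := e0.symm
      _ ≤ _ := Finset.sum_le_sum fun u _ => Finset.sum_le_sum fun v _ => key u v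

lemma slice_eq (s : U → V → ℝ) (hs : ∀ u v, 0 ≤ s u v)
    (hind : ∀ u v, s u v * (∑ u', ∑ v', s u' v') = (∑ v', s u v') * (∑ u', s u' v)) :
    (∑ u, ∑ v, negMulLog (s u v)) + negMulLog (∑ u, ∑ v, s u v)
      = (∑ u, negMulLog (∑ v, s u v)) + ∑ v, negMulLog (∑ u, s u v) := by
  have main : ∀ u v, s u v * Real.log (s u v) + s u v * Real.log (∑ u, ∑ v, s u v)
        - s u v * Real.log (∑ v', s u v') - s u v * Real.log (∑ u', s u' v) = 0 := by
    intro u v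
    rcases (hs u v).eq_or_lt with h | hpos
    · rw [← h]; ring
    · have hc0 : 0 ≤ ∑ u', ∑ v', s u' v' :=
        Finset.sum_nonneg fun u _ => Finset.sum_nonneg fun v _ => hs u v
      have hsupos : 0 < ∑ v', s u v' :=
        lt_of_lt_of_le hpos (Finset.single_le_sum (fun v _ => hs u v) (mem_univ v))
      have hsvpos : 0 < ∑ u', s u' v :=
        lt_of_lt_of_le hpos (Finset.single_le_sum (fun u _ => hs u v) (mem_univ u))
      have hcpos : 0 < ∑ u', ∑ v', s u' v' := by
        rcases hc0.eq_or_lt with h0 | h; swap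
        · exact h
        · exfalso
          have := hind u v
          rw [← h0, mul_zero] at this
          exact (mul_pos hsupos hsvpos).ne this
      have hlog : Real.log (s u v) + Real.log (∑ u', ∑ v', s u' v')
          = Real.log (∑ v', s u v') + Real.log (∑ u', s u' v) := by
        rw [← Real.log_mul hpos.ne' hcpos.ne', ← Real.log_mul hsupos.ne' hsvpos.ne', hind u v]
      nlinarith [hlog]
  -- now conclude equality via the same rearrangement
  have eL : ∑ u, ∑ v, negMulLog (s u v) = -∑ u, ∑ v, s u v * Real.log (s u v) := by
    simp only [negMulLog, neg_mul, Finset.sum_neg_distrib]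
  have eC : negMulLog (∑ u, ∑ v, s u v)
      = -∑ u, ∑ v, s u v * Real.log (∑ u, ∑ v, s u v) := by
    simp only [negMulLog, neg_mul, Finset.sum_neg_distrib, neg_inj]
    rw [Finset.sum_mul]
    exact Finset.sum_congr rfl fun u _ => Finset.sum_mul _ _ _
  have eR1 : ∑ u, negMulLog (∑ v, s u v) = -∑ u, ∑ v, s u v * Real.log (∑ v', s u v') := by
    simp only [negMulLog, neg_mul, Finset.sum_neg_distrib, neg_inj]
    exact Finset.sum_congr rfl fun u _ => Finset.sum_mul _ _ _
  have eR2 : ∑ v, negMulLog (∑ u, s u v) = -∑ u, ∑ v, s u v * Real.log (∑ u', s u' v) := by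
    simp only [negMulLog, neg_mul, Finset.sum_neg_distrib, neg_inj]
    rw [Finset.sum_comm]
    exact Finset.sum_congr rfl fun v _ => Finset.sum_mul _ _ _
  have mainsum : ∑ u, ∑ v, (s u v * Real.log (s u v) + s u v * Real.log (∑ u, ∑ v, s u v)
        - s u v * Real.log (∑ v', s u v') - s u v * Real.log (∑ u', s u' v)) = 0 :=
    Finset.sum_eq_zero fun u _ => Finset.sum_eq_zero fun v _ => main u v
  simp only [Finset.sum_add_distrib, Finset.sum_sub_distrib] at mainsum
  rw [eL, eC, eR1, eR2]
  linarith

end Slice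

section Core

variable {U V W : Type*} [Fintype U] [Fintype V] [Fintype W]

lemma core_le (r : U → V → W → ℝ) (ruw : U → W → ℝ) (rvw : V → W → ℝ) (rW : W → ℝ)
    (hr : ∀ u v w, 0 ≤ r u v w)
    (h1 : ∀ u w, ruw u w = ∑ v, r u v w) (h2 : ∀ v w, rvw v w = ∑ u, r u v w)
    (h3 : ∀ w, rW w = ∑ u, ∑ v, r u v w) :
    (∑ u, ∑ v, ∑ w, negMulLog (r u v w)) + ∑ w, negMulLog (rW w)
      ≤ (∑ u, ∑ w, negMulLog (ruw u w)) + ∑ v, ∑ w, negMulLog (rvw v w) := by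
  simp only [h1, h2, h3]
  have key : ∀ w, (∑ u, ∑ v, negMulLog (r u v w)) + negMulLog (∑ u, ∑ v, r u v w)
      ≤ (∑ u, negMulLog (∑ v, r u v w)) + ∑ v, negMulLog (∑ u, r u v w) :=
    fun w => slice_le _ (fun u v => hr u v w)
  have hsum := Finset.sum_le_sum (fun w (_ : w ∈ Finset.univ) => key w)
  have eA : ∑ u, ∑ v, ∑ w, negMulLog (r u v w) = ∑ w, ∑ u, ∑ v, negMulLog (r u v w) := by
    calc ∑ u, ∑ v, ∑ w, negMulLog (r u v w) = ∑ u, ∑ w, ∑ v, negMulLog (r u v w) :=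
        Finset.sum_congr rfl fun u _ => Finset.sum_comm
      _ = _ := Finset.sum_comm
  have eB : ∑ u, ∑ w, negMulLog (∑ v, r u v w) = ∑ w, ∑ u, negMulLog (∑ v, r u v w) :=
    Finset.sum_comm
  have eC : ∑ v, ∑ w, negMulLog (∑ u, r u v w) = ∑ w, ∑ v, negMulLog (∑ u, r u v w) :=
    Finset.sum_comm
  rw [eA, eB, eC]
  simpa [Finset.sum_add_distrib] using hsum

lemma core_eq (r : U → V → W → ℝ) (ruw : U → W → ℝ) (rvw : V → W → ℝ) (rW : W → ℝ)
    (hr : ∀ u v w, 0 ≤ r u v w)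
    (h1 : ∀ u w, ruw u w = ∑ v, r u v w) (h2 : ∀ v w, rvw v w = ∑ u, r u v w)
    (h3 : ∀ w, rW w = ∑ u, ∑ v, r u v w)
    (hind : ∀ u v w, r u v w * rW w = ruw u w * rvw v w) :
    (∑ u, ∑ v, ∑ w, negMulLog (r u v w)) + ∑ w, negMulLog (rW w)
      = (∑ u, ∑ w, negMulLog (ruw u w)) + ∑ v, ∑ w, negMulLog (rvw v w) := by
  have hind' : ∀ w u v, r u v w * (∑ u', ∑ v', r u' v' w)
      = (∑ v', r u v' w) * (∑ u', r u' v w) := by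
    intro w u v
    have := hind u v w
    rwa [h1, h2, h3] at this
  simp only [h1, h2, h3]
  have key : ∀ w, (∑ u, ∑ v, negMulLog (r u v w)) + negMulLog (∑ u, ∑ v, r u v w)
      = (∑ u, negMulLog (∑ v, r u v w)) + ∑ v, negMulLog (∑ u, r u v w) :=
    fun w => slice_eq _ (fun u v => hr u v w) (hind' w)
  have hsum : ∑ w, ((∑ u, ∑ v, negMulLog (r u v w)) + negMulLog (∑ u, ∑ v, r u v w))
      = ∑ w, ((∑ u, negMulLog (∑ v, r u v w)) + ∑ v, negMulLog (∑ u, r u v w)) :=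
    Finset.sum_congr rfl fun w _ => key w
  have eA : ∑ u, ∑ v, ∑ w, negMulLog (r u v w) = ∑ w, ∑ u, ∑ v, negMulLog (r u v w) := by
    calc ∑ u, ∑ v, ∑ w, negMulLog (r u v w) = ∑ u, ∑ w, ∑ v, negMulLog (r u v w) :=
        Finset.sum_congr rfl fun u _ => Finset.sum_comm
      _ = _ := Finset.sum_comm
  have eB : ∑ u, ∑ w, negMulLog (∑ v, r u v w) = ∑ w, ∑ u, negMulLog (∑ v, r u v w) :=
    Finset.sum_comm
  have eC : ∑ v, ∑ w, negMulLog (∑ u, r u v w) = ∑ w, ∑ v, negMulLog (∑ u, r u v w) :=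
    Finset.sum_comm
  rw [eA, eB, eC]
  simpa [Finset.sum_add_distrib] using hsum

end Core

section EntTransport

variable {O : Type*} [Fintype O] (p : O → ℝ)

lemma pmfOf_eq_pr {C : Type*} [DecidableEq C] (Y : O → C) (c : C) :
    pmfOf p Y c = pr p (fun w => Y w = c) := rfl

lemma Hent_map_inj {C D : Type*} [Fintype C] [DecidableEq C] [Fintype D] [DecidableEq D]
    (Y : O → C) (f : C → D) (hf : Function.Injective f) :
    Hent p (fun w => f (Y w)) = Hent p Y := by
  unfold Hent
  have h3 : ∑ d, negMulLog (pmfOf p (fun w => f (Y w)) d)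
      = ∑ d ∈ Finset.univ.image f, negMulLog (pmfOf p (fun w => f (Y w)) d) := by
    symm
    apply Finset.sum_subset (Finset.subset_univ _)
    intro d _ hd
    have hzero : pmfOf p (fun w => f (Y w)) d = 0 := by
      unfold pmfOf
      apply Finset.sum_eq_zero
      intro w _
      have : f (Y w) ≠ d := fun h => hd (Finset.mem_image.2 ⟨Y w, Finset.mem_univ _, h⟩)
      simp [this]
    rw [hzero, negMulLog_zero]
  have h1 : ∑ d ∈ Finset.univ.image f, negMulLog (pmfOf p (fun w => f (Y w)) d)
      = ∑ c, negMulLog (pmfOf p (fun w => f (Y w)) (f c)) :=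
    Finset.sum_image (fun x _ y _ h => hf h)
  rw [h3, h1]
  refine Finset.sum_congr rfl fun c _ => ?_
  congr 1
  unfold pmfOf
  exact Finset.sum_congr rfl fun w _ => by simp [hf.eq_iff]

lemma Hent_pair {C D : Type*} [Fintype C] [DecidableEq C] [Fintype D] [DecidableEq D]
    (Y : O → C) (Z : O → D) :
    Hent p (fun w => (Y w, Z w))
      = ∑ c, ∑ d, negMulLog (pr p (fun w => Y w = c ∧ Z w = d)) := by
  unfold Hent
  rw [Fintype.sum_prod_type]
  refine Finset.sum_congr rfl fun c _ => Finset.sum_congr rfl fun d _ => ?_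
  congr 1
  unfold pmfOf pr
  exact Finset.sum_congr rfl fun w _ => by simp [Prod.ext_iff]

lemma Hent_triple {C D E : Type*} [Fintype C] [DecidableEq C] [Fintype D] [DecidableEq D]
    [Fintype E] [DecidableEq E] (Y : O → C) (Z : O → D) (Wv : O → E) :
    Hent p (fun w => (Y w, Z w, Wv w))
      = ∑ c, ∑ d, ∑ e, negMulLog (pr p (fun w => Y w = c ∧ Z w = d ∧ Wv w = e)) := by
  unfold Hent
  rw [Fintype.sum_prod_type]
  refine Finset.sum_congr rfl fun c _ => ?_
  rw [Fintype.sum_prod_type]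
  refine Finset.sum_congr rfl fun d _ => Finset.sum_congr rfl fun e _ => ?_
  congr 1
  unfold pmfOf pr
  exact Finset.sum_congr rfl fun w _ => by simp [Prod.ext_iff, and_assoc]

end EntTransport

section CI

variable {O A B : Type*} [Fintype O] [Fintype A] [DecidableEq A] [Fintype B] [DecidableEq B]
variable (p : O → ℝ) {m : ℕ} (X : Fin m → O → A) (Hh : O → B)

/-- Summing the joint `P(X i = a, Hh = b)` over `a` gives `P(Hh = b)`. -/
lemma sum_joint (i : Fin m) (b : B) :
    ∑ a, pr p (fun w => X i w = a ∧ Hh w = b) = pr p (fun w => Hh w = b) := by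
  rw [pr_partition p (X i) (fun w => Hh w = b)]
  exact Finset.sum_congr rfl fun a _ => pr_congr p fun w => and_comm

/-- Marginalized form of conditional independence over a subset `K` of indices. -/
lemma ci_subset (hp : ∀ w, 0 ≤ p w) (hci : CondIndep p m X Hh) (hm : 0 < m)
    (K : Finset (Fin m)) (v : {x // x ∈ K} → A) (b : B) :
    pr p (fun w => (fun i : {x // x ∈ K} => X i.1 w) = v ∧ Hh w = b)
        * (pr p (fun w => Hh w = b)) ^ K.card
      = pr p (fun w => Hh w = b)
        * ∏ i : {x // x ∈ K}, pr p (fun w => X i.1 w = v i ∧ Hh w = b) := by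
  classical
  set c := pr p (fun w => Hh w = b) with hc
  have hc0 : 0 ≤ c := pr_nonneg p hp _
  set E := fun w => (fun i : {x // x ∈ K} => X i.1 w) = v ∧ Hh w = b with hE
  rcases hc0.eq_or_lt with h0 | hcpos
  · have hle : pr p E ≤ c := pr_mono p hp fun w h => h.2
    have hE0 : pr p E = 0 := le_antisymm (by rwa [← h0] at hle) (pr_nonneg p hp _)
    rw [hE0, ← h0]
    simp
  · have hKm : K.card ≤ m := by
      simpa using Finset.card_le_univ K
    set r := fun (i : Fin m) (a : A) => pr p (fun w => X i w = a ∧ Hh w = b) with hr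
    -- step 1: partition by the full tuple
    have step1 : pr p E = ∑ a : Fin m → A,
        (if (∀ i : {x // x ∈ K}, a i.1 = v i)
          then pr p (fun w => (∀ i, X i w = a i) ∧ Hh w = b) else 0) := by
      rw [pr_partition p (fun w => fun i => X i w) E]
      refine Finset.sum_congr rfl fun a _ => ?_
      by_cases hcompat : ∀ i : {x // x ∈ K}, a i.1 = v i
      · rw [if_pos hcompat]
        refine pr_congr p fun w => ?_
        constructor
        · rintro ⟨⟨hv, hb⟩, hfull⟩
          exact ⟨fun i => congrFun hfull i, hb⟩
        · rintro ⟨hfull, hb⟩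
          refine ⟨⟨funext fun i => ?_, hb⟩, funext hfull⟩
          rw [hfull i.1, hcompat i]
      · rw [if_neg hcompat]
        refine pr_eq_zero_of p fun w => ?_
        rintro ⟨⟨hv, hb⟩, hfull⟩
        exact hcompat fun i => by
          rw [← congrFun hfull i.1, ← hv]
    -- step 2: use conditional independence termwise
    have step2 : pr p E * c ^ (m - 1) = ∑ a : Fin m → A,
        (if (∀ i : {x // x ∈ K}, a i.1 = v i) then ∏ i, r i (a i) else 0) := by
      rw [step1, Finset.sum_mul]
      refine Finset.sum_congr rfl fun a _ => ?_
      by_cases hcompat : ∀ i : {x // x ∈ K}, a i.1 = v i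
      · rw [if_pos hcompat, if_pos hcompat, hci a b]
      · rw [if_neg hcompat, if_neg hcompat, zero_mul]
    -- step 3: rewrite the summand as a full product
    set g := fun (i : Fin m) (x : A) =>
      if h : i ∈ K then (if x = v ⟨i, h⟩ then r i x else 0) else r i x with hg
    have step3 : ∀ a : Fin m → A,
        (if (∀ i : {x // x ∈ K}, a i.1 = v i) then ∏ i, r i (a i) else 0)
          = ∏ i, g i (a i) := by
      intro a
      by_cases hcompat : ∀ i : {x // x ∈ K}, a i.1 = v i
      · rw [if_pos hcompat]
        refine Finset.prod_congr rfl fun i _ => ?_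
        by_cases h : i ∈ K
        · rw [hg]; simp only [dif_pos h]
          rw [if_pos (hcompat ⟨i, h⟩)]
        · rw [hg]; simp only [dif_neg h]
      · rw [if_neg hcompat]
        push_neg at hcompat
        obtain ⟨i0, hi0⟩ := hcompat
        symm
        apply Finset.prod_eq_zero (Finset.mem_univ i0.1)
        rw [hg]
        simp only [dif_pos i0.2]
        rw [if_neg]
        exact hi0
    -- step 4+5: sum-product exchange and computing inner sums
    have step5 : ∀ i : Fin m, ∑ x, g i x = if h : i ∈ K then r i (v ⟨i, h⟩) else c := by
      intro i
      by_cases h : i ∈ K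
      · simp only [hg, dif_pos h]
        rw [Finset.sum_ite_eq' Finset.univ (v ⟨i, h⟩) (r i)]
        simp
      · simp only [hg, dif_neg h]
        exact sum_joint p X Hh i b
    have step4 : pr p E * c ^ (m - 1)
        = ∏ i, (if h : i ∈ K then r i (v ⟨i, h⟩) else c) := by
      rw [step2, Finset.sum_congr rfl fun a _ => step3 a, ← Fintype.prod_sum]
      exact Finset.prod_congr rfl fun i _ => step5 i
    -- step 6: split the product over K and its complement
    have step6 : ∏ i, (if h : i ∈ K then r i (v ⟨i, h⟩) else c)
        = (∏ i : {x // x ∈ K}, r i.1 (v i)) * c ^ (m - K.card) := by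
      rw [← Finset.prod_mul_prod_compl K]
      congr 1
      · rw [Finset.univ_eq_attach, ← Finset.prod_attach K
          (fun i => if h : i ∈ K then r i (v ⟨i, h⟩) else c)]
        refine Finset.prod_congr rfl fun x _ => ?_
        rw [dif_pos x.2]
      · rw [Finset.prod_congr rfl (fun i hi => dif_neg (Finset.mem_compl.1 hi)),
          Finset.prod_const, Finset.card_compl, Fintype.card_fin]
    have hmain : pr p E * c ^ (m - 1) = (∏ i : {x // x ∈ K}, r i.1 (v i)) * c ^ (m - K.card) :=
      step4.trans step6
    -- conclude by cancellation
    have hcancel := pow_ne_zero (m - K.card) hcpos.ne'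
    apply mul_right_cancel₀ hcancel
    calc pr p E * c ^ K.card * c ^ (m - K.card)
        = pr p E * c ^ m := by rw [mul_assoc, ← pow_add, Nat.add_sub_cancel' hKm]
      _ = pr p E * (c ^ (m - 1) * c) := by
          rw [← pow_succ, Nat.sub_add_cancel hm]
      _ = (pr p E * c ^ (m - 1)) * c := by ring
      _ = ((∏ i : {x // x ∈ K}, r i.1 (v i)) * c ^ (m - K.card)) * c := by rw [hmain]
      _ = (c * ∏ i : {x // x ∈ K}, r i.1 (v i)) * c ^ (m - K.card) := by ring

end CI

section CIPair

variable {O A B : Type*} [Fintype O] [Fintype A] [DecidableEq A] [Fintype B] [DecidableEq B]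
variable (p : O → ℝ) {m : ℕ} (X : Fin m → O → A) (Hh : O → B)

lemma ci_pairwise (hp : ∀ w, 0 ≤ p w) (hci : CondIndep p m X Hh)
    (K : Finset (Fin m)) (k : Fin m) (hkK : k ∉ K) (u : A) (v : {x // x ∈ K} → A) (b : B) :
    pr p (fun w => X k w = u ∧ (fun i : {x // x ∈ K} => X i.1 w) = v ∧ Hh w = b)
        * pr p (fun w => Hh w = b)
      = pr p (fun w => X k w = u ∧ Hh w = b)
        * pr p (fun w => (fun i : {x // x ∈ K} => X i.1 w) = v ∧ Hh w = b) := by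
  classical
  have hm : 0 < m := k.pos
  set c := pr p (fun w => Hh w = b) with hc
  have hc0 : 0 ≤ c := pr_nonneg p hp _
  rcases hc0.eq_or_lt with h0 | hcpos
  · have hceq : pr p (fun w => Hh w = b) = 0 := by rw [← hc, ← h0]
    have h1 : pr p (fun w => X k w = u ∧ Hh w = b) = 0 := by
      refine le_antisymm ?_ (pr_nonneg p hp _)
      have h2 := pr_mono p hp (E := fun w => X k w = u ∧ Hh w = b)
        (F := fun w => Hh w = b) (fun w h => h.2)
      rwa [hceq] at h2
    rw [← h0, h1, mul_zero, zero_mul]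
  · -- extension of v to insert k K
    set v' : {x // x ∈ insert k K} → A := fun i =>
      if h : i.1 = k then u
      else v ⟨i.1, (Finset.mem_insert.1 i.2).resolve_left h⟩ with hv'
    have hne : ∀ (i : {x // x ∈ K}), (i.1 : Fin m) ≠ k := fun i h => hkK (h ▸ i.2)
    have A1 := ci_subset p X Hh hp hci hm (insert k K) v' b
    have A2 := ci_subset p X Hh hp hci hm K v b
    rw [Finset.card_insert_of_notMem hkK] at A1
    -- identify the event for insert k K with the conjunction
    have hevent : pr p (fun w => (fun i : {x // x ∈ insert k K} => X i.1 w) = v' ∧ Hh w = b)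
        = pr p (fun w => X k w = u ∧ (fun i : {x // x ∈ K} => X i.1 w) = v ∧ Hh w = b) := by
      refine pr_congr p fun w => ?_
      constructor
      · rintro ⟨htup, hb⟩
        have hk' : X k w = u := by
          have := congrFun htup ⟨k, Finset.mem_insert_self k K⟩
          simpa [hv'] using this
        refine ⟨hk', funext fun i => ?_, hb⟩
        have := congrFun htup ⟨i.1, Finset.mem_insert_of_mem i.2⟩
        simp only [hv'] at this
        rw [dif_neg (hne i)] at this
        rw [this]
      · rintro ⟨hu, htup, hb⟩
        refine ⟨funext fun i => ?_, hb⟩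
        by_cases h : i.1 = k
        · simp only [hv', dif_pos h]
          rw [← hu]
          congr 1
        · simp only [hv', dif_neg h]
          have := congrFun htup ⟨i.1, (Finset.mem_insert.1 i.2).resolve_left h⟩
          exact this
    -- identify the product over insert k K
    have hprod : (∏ i : {x // x ∈ insert k K}, pr p (fun w => X i.1 w = v' i ∧ Hh w = b))
        = pr p (fun w => X k w = u ∧ Hh w = b)
          * ∏ i : {x // x ∈ K}, pr p (fun w => X i.1 w = v i ∧ Hh w = b) := by
      rw [Finset.univ_eq_attach, Finset.attach_insert, Finset.prod_insert, Finset.prod_image]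
      · congr 1
        · congr 1
          funext w
          simp only [hv', dif_pos rfl]
        · rw [Finset.univ_eq_attach]
          refine Finset.prod_congr rfl fun i _ => ?_
          congr 1
          funext w
          simp only [hv']
          rw [dif_neg (hne i)]
      · intro x _ y _ hxy
        have hval := congrArg Subtype.val hxy
        exact Subtype.ext hval
      · intro hmem
        obtain ⟨i, _, hi⟩ := Finset.mem_image.1 hmem
        exact hne i (congrArg Subtype.val hi)
    rw [hevent, hprod] at A1
    -- combine A1 and A2
    have hcancel := pow_ne_zero K.card hcpos.ne'
    apply mul_right_cancel₀ hcancel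
    calc pr p (fun w => X k w = u ∧ (fun i : {x // x ∈ K} => X i.1 w) = v ∧ Hh w = b)
          * c * c ^ K.card
        = pr p (fun w => X k w = u ∧ (fun i : {x // x ∈ K} => X i.1 w) = v ∧ Hh w = b)
          * c ^ (K.card + 1) := by rw [pow_succ]; ring
      _ = c * (pr p (fun w => X k w = u ∧ Hh w = b)
            * ∏ i : {x // x ∈ K}, pr p (fun w => X i.1 w = v i ∧ Hh w = b)) := A1
      _ = pr p (fun w => X k w = u ∧ Hh w = b)
            * (c * ∏ i : {x // x ∈ K}, pr p (fun w => X i.1 w = v i ∧ Hh w = b)) := by ring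
      _ = pr p (fun w => X k w = u ∧ Hh w = b)
            * (pr p (fun w => (fun i : {x // x ∈ K} => X i.1 w) = v ∧ Hh w = b) * c ^ K.card) := by
          rw [← A2]
      _ = _ := by ring

end CIPair

set_option maxHeartbeats 2000000 in
theorem mutual_information_submodular_of_condIndep
    {O A B : Type*} [Fintype O] [Fintype A] [DecidableEq A] [Fintype B] [DecidableEq B]
    (p : O → ℝ) (hp : ∀ w, 0 ≤ p w) (hp1 : ∑ w, p w = 1)
    (m : ℕ) (X : Fin m → O → A) (Hh : O → B)
    (hci : CondIndep p m X Hh)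
    (S T : Finset (Fin m)) (hST : S ⊆ T) (k : Fin m) (hk : k ∉ T) :
    MIsub p X Hh (insert k T) - MIsub p X Hh T
      ≤ MIsub p X Hh (insert k S) - MIsub p X Hh S := by
  classical
  have hkS : k ∉ S := fun h => hk (hST h)
  -- Step A: conditional independence gives an exact chain rule identity
  have eqA : ∀ (K : Finset (Fin m)), k ∉ K →
      Hent p (fun w => ((fun i : {x // x ∈ insert k K} => X i.1 w), Hh w))
        + Hent p Hh
      = Hent p (fun w => (X k w, Hh w))
        + Hent p (fun w => ((fun i : {x // x ∈ K} => X i.1 w), Hh w)) := by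
    intro K hkK
    have key := core_eq
      (fun u v b => pr p (fun w => X k w = u ∧ (fun i : {x // x ∈ K} => X i.1 w) = v ∧ Hh w = b))
      (fun u b => pr p (fun w => X k w = u ∧ Hh w = b))
      (fun v b => pr p (fun w => (fun i : {x // x ∈ K} => X i.1 w) = v ∧ Hh w = b))
      (fun b => pr p (fun w => Hh w = b))
      (fun _ _ _ => pr_nonneg p hp _)
      (fun u b => by
        beta_reduce
        rw [pr_partition p (fun w => fun i : {x // x ∈ K} => X i.1 w)
          (fun w => X k w = u ∧ Hh w = b)]
        exact Finset.sum_congr rfl fun v _ => pr_congr p fun w => by tauto)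
      (fun v b => by
        beta_reduce
        rw [pr_partition p (X k)
          (fun w => (fun i : {x // x ∈ K} => X i.1 w) = v ∧ Hh w = b)]
        exact Finset.sum_congr rfl fun u _ => pr_congr p fun w => by tauto)
      (fun b => by
        beta_reduce
        rw [pr_partition p (X k) (fun w => Hh w = b)]
        refine Finset.sum_congr rfl fun u _ => ?_
        rw [pr_partition p (fun w => fun i : {x // x ∈ K} => X i.1 w)
          (fun w => Hh w = b ∧ X k w = u)]
        exact Finset.sum_congr rfl fun v _ => pr_congr p fun w => by tauto)
      (fun u v b => ci_pairwise p X Hh hp hci K k hkK u v b)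
    beta_reduce at key
    rw [← Hent_triple p (X k) (fun w => fun i : {x // x ∈ K} => X i.1 w) Hh,
        ← Hent_pair p (X k) Hh,
        ← Hent_pair p (fun w => fun i : {x // x ∈ K} => X i.1 w) Hh] at key
    have hB : ∑ b, negMulLog (pr p (fun w => Hh w = b)) = Hent p Hh := by
      unfold Hent
      exact Finset.sum_congr rfl fun b _ => by rw [pmfOf_eq_pr]
    rw [hB] at key
    have hid : Hent p (fun w => (X k w, (fun i : {x // x ∈ K} => X i.1 w), Hh w))
        = Hent p (fun w => ((fun i : {x // x ∈ insert k K} => X i.1 w), Hh w)) := by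
      have hf : Function.Injective (fun q : ({x // x ∈ insert k K} → A) × B =>
          ((q.1 ⟨k, Finset.mem_insert_self k K⟩ : A),
            (fun i : {x // x ∈ K} => q.1 ⟨i.1, Finset.mem_insert_of_mem i.2⟩), q.2)) := by
        intro q q' h
        have h1 := congrArg Prod.fst h
        have h2 := congrArg (fun z : A × ({x // x ∈ K} → A) × B => z.2.1) h
        have h3 := congrArg (fun z : A × ({x // x ∈ K} → A) × B => z.2.2) h
        simp only at h1 h2 h3
        refine Prod.ext ?_ h3
        funext i
        rcases Finset.mem_insert.1 i.2 with hik | hiK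
        · have hi : i = ⟨k, Finset.mem_insert_self k K⟩ := Subtype.ext hik
          rw [hi]; exact h1
        · exact congrFun h2 ⟨i.1, hiK⟩
      exact Hent_map_inj p
        (fun w => ((fun i : {x // x ∈ insert k K} => X i.1 w), Hh w))
        (fun q : ({x // x ∈ insert k K} → A) × B =>
          ((q.1 ⟨k, Finset.mem_insert_self k K⟩ : A),
            (fun i : {x // x ∈ K} => q.1 ⟨i.1, Finset.mem_insert_of_mem i.2⟩), q.2)) hf
    rw [hid] at key
    linarith [key]
  -- Step B: submodularity of entropy
  have eqB :
      Hent p (fun w => fun i : {x // x ∈ insert k T} => X i.1 w)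
        + Hent p (fun w => fun i : {x // x ∈ S} => X i.1 w)
      ≤ Hent p (fun w => fun i : {x // x ∈ insert k S} => X i.1 w)
        + Hent p (fun w => fun i : {x // x ∈ T} => X i.1 w) := by
    have key := core_le
      (fun u v z => pr p (fun ω => X k ω = u ∧ (fun i : {x // x ∈ T \ S} => X i.1 ω) = v
        ∧ (fun i : {x // x ∈ S} => X i.1 ω) = z))
      (fun u z => pr p (fun ω => X k ω = u ∧ (fun i : {x // x ∈ S} => X i.1 ω) = z))
      (fun v z => pr p (fun ω => (fun i : {x // x ∈ T \ S} => X i.1 ω) = v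
        ∧ (fun i : {x // x ∈ S} => X i.1 ω) = z))
      (fun z => pr p (fun ω => (fun i : {x // x ∈ S} => X i.1 ω) = z))
      (fun _ _ _ => pr_nonneg p hp _)
      (fun u z => by
        beta_reduce
        rw [pr_partition p (fun ω => fun i : {x // x ∈ T \ S} => X i.1 ω)
          (fun ω => X k ω = u ∧ (fun i : {x // x ∈ S} => X i.1 ω) = z)]
        exact Finset.sum_congr rfl fun v _ => pr_congr p fun ω => by tauto)
      (fun v z => by
        beta_reduce
        rw [pr_partition p (X k)
          (fun ω => (fun i : {x // x ∈ T \ S} => X i.1 ω) = v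
            ∧ (fun i : {x // x ∈ S} => X i.1 ω) = z)]
        exact Finset.sum_congr rfl fun u _ => pr_congr p fun ω => by tauto)
      (fun z => by
        beta_reduce
        rw [pr_partition p (X k) (fun ω => (fun i : {x // x ∈ S} => X i.1 ω) = z)]
        refine Finset.sum_congr rfl fun u _ => ?_
        rw [pr_partition p (fun ω => fun i : {x // x ∈ T \ S} => X i.1 ω)
          (fun ω => (fun i : {x // x ∈ S} => X i.1 ω) = z ∧ X k ω = u)]
        exact Finset.sum_congr rfl fun v _ => pr_congr p fun ω => by tauto)
    beta_reduce at key
    rw [← Hent_triple p (X k) (fun ω => fun i : {x // x ∈ T \ S} => X i.1 ω)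
        (fun ω => fun i : {x // x ∈ S} => X i.1 ω),
        ← Hent_pair p (X k) (fun ω => fun i : {x // x ∈ S} => X i.1 ω),
        ← Hent_pair p (fun ω => fun i : {x // x ∈ T \ S} => X i.1 ω)
          (fun ω => fun i : {x // x ∈ S} => X i.1 ω)] at key
    have hW : ∑ z, negMulLog (pr p (fun ω => (fun i : {x // x ∈ S} => X i.1 ω) = z))
        = Hent p (fun ω => fun i : {x // x ∈ S} => X i.1 ω) := by
      unfold Hent
      exact Finset.sum_congr rfl fun z _ => by rw [pmfOf_eq_pr]
    rw [hW] at key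
    have hid1 : Hent p (fun ω => (X k ω, (fun i : {x // x ∈ T \ S} => X i.1 ω),
          (fun i : {x // x ∈ S} => X i.1 ω)))
        = Hent p (fun ω => fun i : {x // x ∈ insert k T} => X i.1 ω) := by
      have hf : Function.Injective (fun q : {x // x ∈ insert k T} → A =>
          ((q ⟨k, Finset.mem_insert_self k T⟩ : A),
            (fun i : {x // x ∈ T \ S} => q ⟨i.1,
              Finset.mem_insert_of_mem (Finset.mem_sdiff.1 i.2).1⟩),
            (fun i : {x // x ∈ S} => q ⟨i.1, Finset.mem_insert_of_mem (hST i.2)⟩))) := by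
        intro q q' h
        have h1 := congrArg Prod.fst h
        have h2 := congrArg (fun z : A × ({x // x ∈ T \ S} → A) × ({x // x ∈ S} → A)
          => z.2.1) h
        have h3 := congrArg (fun z : A × ({x // x ∈ T \ S} → A) × ({x // x ∈ S} → A)
          => z.2.2) h
        simp only at h1 h2 h3
        funext i
        rcases Finset.mem_insert.1 i.2 with hik | hiT
        · have hi : i = ⟨k, Finset.mem_insert_self k T⟩ := Subtype.ext hik
          rw [hi]; exact h1
        · by_cases hiS : i.1 ∈ S
          · exact congrFun h3 ⟨i.1, hiS⟩
          · exact congrFun h2 ⟨i.1, Finset.mem_sdiff.2 ⟨hiT, hiS⟩⟩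
      exact Hent_map_inj p (fun ω => fun i : {x // x ∈ insert k T} => X i.1 ω)
        (fun q : {x // x ∈ insert k T} → A =>
          ((q ⟨k, Finset.mem_insert_self k T⟩ : A),
            (fun i : {x // x ∈ T \ S} => q ⟨i.1,
              Finset.mem_insert_of_mem (Finset.mem_sdiff.1 i.2).1⟩),
            (fun i : {x // x ∈ S} => q ⟨i.1, Finset.mem_insert_of_mem (hST i.2)⟩))) hf
    have hid2 : Hent p (fun ω => (X k ω, (fun i : {x // x ∈ S} => X i.1 ω)))
        = Hent p (fun ω => fun i : {x // x ∈ insert k S} => X i.1 ω) := by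
      have hf : Function.Injective (fun q : {x // x ∈ insert k S} → A =>
          ((q ⟨k, Finset.mem_insert_self k S⟩ : A),
            (fun i : {x // x ∈ S} => q ⟨i.1, Finset.mem_insert_of_mem i.2⟩))) := by
        intro q q' h
        have h1 := congrArg Prod.fst h
        have h2 := congrArg (fun z : A × ({x // x ∈ S} → A) => z.2) h
        simp only at h1 h2
        funext i
        rcases Finset.mem_insert.1 i.2 with hik | hiS
        · have hi : i = ⟨k, Finset.mem_insert_self k S⟩ := Subtype.ext hik
          rw [hi]; exact h1
        · exact congrFun h2 ⟨i.1, hiS⟩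
      exact Hent_map_inj p (fun ω => fun i : {x // x ∈ insert k S} => X i.1 ω)
        (fun q : {x // x ∈ insert k S} → A =>
          ((q ⟨k, Finset.mem_insert_self k S⟩ : A),
            (fun i : {x // x ∈ S} => q ⟨i.1, Finset.mem_insert_of_mem i.2⟩))) hf
    have hid3 : Hent p (fun ω => ((fun i : {x // x ∈ T \ S} => X i.1 ω),
          (fun i : {x // x ∈ S} => X i.1 ω)))
        = Hent p (fun ω => fun i : {x // x ∈ T} => X i.1 ω) := by
      have hf : Function.Injective (fun q : {x // x ∈ T} → A =>
          ((fun i : {x // x ∈ T \ S} => q ⟨i.1, (Finset.mem_sdiff.1 i.2).1⟩),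
            (fun i : {x // x ∈ S} => q ⟨i.1, hST i.2⟩))) := by
        intro q q' h
        have h1 := congrArg Prod.fst h
        have h2 := congrArg (fun z : ({x // x ∈ T \ S} → A) × ({x // x ∈ S} → A) => z.2) h
        simp only at h1 h2
        funext i
        by_cases hiS : i.1 ∈ S
        · exact congrFun h2 ⟨i.1, hiS⟩
        · exact congrFun h1 ⟨i.1, Finset.mem_sdiff.2 ⟨i.2, hiS⟩⟩
      exact Hent_map_inj p (fun ω => fun i : {x // x ∈ T} => X i.1 ω)
        (fun q : {x // x ∈ T} → A =>
          ((fun i : {x // x ∈ T \ S} => q ⟨i.1, (Finset.mem_sdiff.1 i.2).1⟩),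
            (fun i : {x // x ∈ S} => q ⟨i.1, hST i.2⟩))) hf
    rw [hid1, hid2, hid3] at key
    linarith [key]
  have eA1 := eqA S hkS
  have eA2 := eqA T hk
  simp only [MIsub, MI]
  linarith [eA1, eA2, eqB]
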